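/- Let B be an instance of (2,2)-E3-SAT and let I_{3,3}(B) be the one-to-one HRC instance constructed from B as described. Then B is satisfiable if and only if I_{3,3}(B) admits a complete stable matching, where a matching is complete if every resident is matched in it. -/

import Mathlib

/-- A one-to-one HRC instance: residents are partitioned into single residents and
ordered couples; all hospitals have capacity 1. -/
structure HRC1 (R H : Type) where
  singles : List R
  couples : List (R × R)
  singlePref : R → List H
  couplePref : R × R → List (H × H)
  hospPref : H → List R

namespace HRC1

/-- `x` precedes `y` on the strict preference list `l`. -/
def Prefers {α : Type} [DecidableEq α] (l : List α) (x y : α) : Prop :=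
  x ∈ l ∧ y ∈ l ∧ l.idxOf x < l.idxOf y

variable {R H : Type} [DecidableEq R] [DecidableEq H]

/-- `M` is a matching of the instance `I`. -/
def IsMatching (I : HRC1 R H) (M : R → Option H) : Prop :=
  (∀ r₁ r₂ h, M r₁ = some h → M r₂ = some h → r₁ = r₂) ∧
  (∀ r ∈ I.singles, ∀ h, M r = some h → h ∈ I.singlePref r) ∧
  (∀ c ∈ I.couples,
    (M c.1 = none ∧ M c.2 = none) ∨
    ∃ hp ∈ I.couplePref c, M c.1 = some hp.1 ∧ M c.2 = some hp.2) ∧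
  (∀ r, (M r).isSome → r ∈ I.singles ∨ ∃ c ∈ I.couples, r = c.1 ∨ r = c.2)

/-- Hospital `h` is unmatched in `M`. -/
def HospFree (M : R → Option H) (h : H) : Prop := ∀ r, M r ≠ some h

/-- Hospital `h` is unmatched in `M`, or prefers `r` to its current assignee. -/
def HospOpenFor (I : HRC1 R H) (M : R → Option H) (h : H) (r : R) : Prop :=
  HospFree M h ∨ ∃ r', M r' = some h ∧ Prefers (I.hospPref h) r r'

/-- Blocking pair consisting of a single resident `r` and a hospital `h`. -/
def BlockSingle (I : HRC1 R H) (M : R → Option H) (r : R) (h : H) : Prop :=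
  r ∈ I.singles ∧ h ∈ I.singlePref r ∧
  (M r = none ∨ ∃ h', M r = some h' ∧ Prefers (I.singlePref r) h h') ∧
  I.HospOpenFor M h r

/-- Blocking pair consisting of a couple `c` and a pair of hospitals `hp` on its joint list. -/
def BlockCouple (I : HRC1 R H) (M : R → Option H) (c : R × R) (hp : H × H) : Prop :=
  c ∈ I.couples ∧ hp ∈ I.couplePref c ∧
  ((M c.1 = none ∧ M c.2 = none) ∨
    ∃ hp' ∈ I.couplePref c, M c.1 = some hp'.1 ∧ M c.2 = some hp'.2 ∧
      Prefers (I.couplePref c) hp hp') ∧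
  (M c.1 = some hp.1 ∨ I.HospOpenFor M hp.1 c.1) ∧
  (M c.2 = some hp.2 ∨ I.HospOpenFor M hp.2 c.2)

/-- `M` is a stable matching of the instance `I`. -/
def Stable (I : HRC1 R H) (M : R → Option H) : Prop :=
  I.IsMatching M ∧ (∀ r h, ¬ I.BlockSingle M r h) ∧ (∀ c hp, ¬ I.BlockCouple M c hp)

end HRC1

/-- An instance of (2,2)-E3-SAT: `m` clauses, each with exactly 3 literals over `n`
variables (a literal is a variable together with a polarity, `true` for positive);
`occ l` enumerates the two occurrences of the literal `l`, so that each of the literals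
`vᵢ` and `¬vᵢ` appears exactly twice. -/
structure E3SAT (n m : ℕ) where
  clause : Fin m → Fin 3 → Fin n × Bool
  occ : Fin n × Bool → Fin 2 → Fin m × Fin 3
  occ_spec : ∀ l r, clause (occ l r).1 (occ l r).2 = l
  occ_inj : ∀ l, occ l 0 ≠ occ l 1
  occ_surj : ∀ j s, ∃ r, occ (clause j s) r = (j, s)

namespace E3SAT

variable {n m : ℕ}

/-- `B` is satisfiable. -/
def Satisfiable (B : E3SAT n m) : Prop :=
  ∃ f : Fin n → Bool, ∀ j : Fin m, ∃ s : Fin 3, f (B.clause j s).1 = (B.clause j s).2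

/-- The index (`0` or `1`) of the occurrence of its literal that position `s` of
clause `j` constitutes. -/
def rIdx (B : E3SAT n m) (j : Fin m) (s : Fin 3) : Fin 2 :=
  if B.occ (B.clause j s) 0 = (j, s) then 0 else 1

end E3SAT

/-- Residents of the instance `I₃₃(B)`: `X i r = x_{4i+r}`, `K i r = k_{4i+r}`,
`P j s = p_j^{s+1}`, `Q j = q_{j+1}`, `T j = t_{j+1}` (0-based indices). -/
inductive Res3 (n m : ℕ)
  | X (i : Fin n) (r : Fin 4)
  | K (i : Fin n) (r : Fin 4)
  | P (j : Fin m) (s : Fin 6)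
  | Q (j : Fin m)
  | T (j : Fin m)
deriving DecidableEq

/-- Hospitals of the instance `I₃₃(B)`: `Y i r = y_{4i+r}`, `L i r = l_{4i+r}`,
`C j s = c_j^{s+1}`, `Z j r = z_j^{r+1}` (0-based indices). -/
inductive Hos3 (n m : ℕ)
  | Y (i : Fin n) (r : Fin 4)
  | L (i : Fin n) (r : Fin 4)
  | C (j : Fin m) (s : Fin 3)
  | Z (j : Fin m) (r : Fin 5)
deriving DecidableEq

variable {n m : ℕ}

/-- The hospital `c(x_{4i+r})`: for `r ∈ {0,1}` the clause hospital of the `(r+1)`-th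
occurrence of `vᵢ`; for `r ∈ {2,3}` that of the `(r−1)`-th occurrence of `¬vᵢ`. -/
def cX (B : E3SAT n m) (i : Fin n) (r : Fin 4) : Hos3 n m :=
  have hr := r.isLt
  let o := B.occ (i, decide (r.val < 2)) ⟨r.val % 2, by omega⟩
  Hos3.C o.1 o.2

/-- The resident `x(c_j^{s+1})` corresponding to the literal at position `s` of
clause `c_j`. -/
def xOfC (B : E3SAT n m) (j : Fin m) (s : Fin 3) : Res3 n m :=
  let l := B.clause j s
  have hv : (B.rIdx j s).val < 2 := (B.rIdx j s).isLt
  if l.2 then Res3.X l.1 ⟨(B.rIdx j s).val, by omega⟩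
  else Res3.X l.1 ⟨(B.rIdx j s).val + 2, by omega⟩

/-- The one-to-one HRC instance `I₃₃(B)` constructed from the (2,2)-E3-SAT
instance `B`. -/
def instI33 (B : E3SAT n m) : HRC1 (Res3 n m) (Hos3 n m) where
  singles :=
    ((List.finRange m).map fun j => Res3.Q j) ++ ((List.finRange m).map fun j => Res3.T j)
  couples :=
    ((List.finRange n).flatMap fun i =>
      (List.finRange 4).map fun r => (Res3.X i r, Res3.K i r)) ++
    ((List.finRange m).flatMap fun j =>
      (List.finRange 3).map fun s =>
        (Res3.P j ⟨s.val, by have := s.isLt; omega⟩,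
         Res3.P j ⟨s.val + 3, by have := s.isLt; omega⟩))
  singlePref := fun r => match r with
    | Res3.Q j => [Hos3.C j 0, Hos3.C j 1, Hos3.C j 2]
    | Res3.T j => [Hos3.Z j 2, Hos3.Z j 3, Hos3.Z j 4]
    | _ => []
  couplePref := fun c => match c with
    | (Res3.X i r, Res3.K i' r') =>
        if i' = i ∧ r' = r then
          if r = 0 then
            [(Hos3.Y i 0, Hos3.L i 0), (cX B i 0, Hos3.L i 1), (Hos3.Y i 1, Hos3.L i 1)]
          else if r = 1 then
            [(Hos3.Y i 1, Hos3.L i 1), (cX B i 1, Hos3.L i 2), (Hos3.Y i 2, Hos3.L i 2)]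
          else if r = 2 then
            [(Hos3.Y i 3, Hos3.L i 3), (cX B i 2, Hos3.L i 2), (Hos3.Y i 2, Hos3.L i 2)]
          else
            [(Hos3.Y i 0, Hos3.L i 0), (cX B i 3, Hos3.L i 3), (Hos3.Y i 3, Hos3.L i 3)]
        else []
    | (Res3.P j s, Res3.P j' s') =>
        if hc : j' = j ∧ s.val < 3 ∧ s'.val = s.val + 3 then
          [(Hos3.Z j 0, Hos3.Z j 1),
           (Hos3.C j ⟨s.val, hc.2.1⟩, Hos3.Z j ⟨s.val + 2, by have := hc.2.1; omega⟩)]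
        else []
    | _ => []
  hospPref := fun hh => match hh with
    | Hos3.Y i r =>
        if r = 0 then [Res3.X i 0, Res3.X i 3]
        else if r = 1 then [Res3.X i 1, Res3.X i 0]
        else if r = 2 then [Res3.X i 1, Res3.X i 2]
        else [Res3.X i 2, Res3.X i 3]
    | Hos3.L i r =>
        if r = 0 then [Res3.K i 3, Res3.K i 0]
        else if r = 1 then [Res3.K i 0, Res3.K i 1]
        else if r = 2 then [Res3.K i 2, Res3.K i 1]
        else [Res3.K i 3, Res3.K i 2]
    | Hos3.C j s =>
        [Res3.P j ⟨s.val, by have := s.isLt; omega⟩, xOfC B j s, Res3.Q j]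
    | Hos3.Z j r =>
        if r = 0 then [Res3.P j 0, Res3.P j 1, Res3.P j 2]
        else if r = 1 then [Res3.P j 5, Res3.P j 4, Res3.P j 3]
        else if r = 2 then [Res3.P j 3, Res3.T j]
        else if r = 3 then [Res3.P j 4, Res3.T j]
        else [Res3.P j 5, Res3.T j]


section Reduction

open Res3 Hos3

variable {n m : ℕ}

lemma E3SAT.occ_rIdx (B : E3SAT n m) (j : Fin m) (s : Fin 3) :
    B.occ (B.clause j s) (B.rIdx j s) = (j, s) := by
  unfold E3SAT.rIdx
  split
  · assumption
  · rcases B.occ_surj j s with ⟨r, hr⟩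
    fin_cases r
    · exact absurd hr (by assumption)
    · exact hr

lemma rIdx_occ (B : E3SAT n m) (l : Fin n × Bool) (ρ : Fin 2) :
    B.rIdx (B.occ l ρ).1 (B.occ l ρ).2 = ρ := by
  have hcl : B.clause (B.occ l ρ).1 (B.occ l ρ).2 = l := B.occ_spec l ρ
  have hcases : ρ = 0 ∨ ρ = 1 := by
    rcases ρ with ⟨v, hv⟩; simp [Fin.ext_iff]; omega
  unfold E3SAT.rIdx
  rw [hcl]
  split
  next h =>
    rcases hcases with h2 | h2
    · exact h2.symm
    · rw [Prod.mk.eta, h2] at h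
      exact absurd h (B.occ_inj l)
  next h =>
    rcases hcases with h2 | h2
    · rw [Prod.mk.eta, h2] at h
      exact absurd rfl h
    · exact h2.symm

lemma xOfC_cX (B : E3SAT n m) (i : Fin n) (r : Fin 4) :
    xOfC B (B.occ (i, decide (r.val < 2)) ⟨r.val % 2, by omega⟩).1
           (B.occ (i, decide (r.val < 2)) ⟨r.val % 2, by omega⟩).2 = Res3.X i r := by
  have hrv := r.isLt
  have hcl := B.occ_spec (i, decide (r.val < 2)) ⟨r.val % 2, by omega⟩
  have hrIdx := rIdx_occ B (i, decide (r.val < 2)) ⟨r.val % 2, by omega⟩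
  unfold xOfC
  simp only [hcl, hrIdx]
  by_cases hb : r.val < 2
  · rw [if_pos (by simp [hb])]
    congr 1
    simp [Fin.ext_iff]
    omega
  · rw [if_neg (by simp [hb])]
    congr 1
    simp [Fin.ext_iff]
    omega

lemma clause_cX (B : E3SAT n m) (i : Fin n) (r : Fin 4) :
    B.clause (B.occ (i, decide (r.val < 2)) ⟨r.val % 2, by omega⟩).1
             (B.occ (i, decide (r.val < 2)) ⟨r.val % 2, by omega⟩).2
      = (i, decide (r.val < 2)) := B.occ_spec _ _

lemma cX_xOfC (B : E3SAT n m) (j : Fin m) (s : Fin 3) (i : Fin n) (r : Fin 4)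
    (h : xOfC B j s = Res3.X i r) :
    cX B i r = Hos3.C j s ∧ B.clause j s = (i, decide (r.val < 2)) := by
  have hocc : B.occ (B.clause j s) (B.rIdx j s) = (j, s) := B.occ_rIdx j s
  have hir := (B.rIdx j s).isLt
  unfold xOfC at h
  by_cases hb : (B.clause j s).2
  · simp only [hb, if_true] at h
    injection h with h1 h2
    have hv2 : (B.rIdx j s).val = r.val := by
      have := congrArg Fin.val h2; simpa using this
    have hr2 : r.val < 2 := by omega
    have hcl : B.clause j s = (i, decide (r.val < 2)) := by
      rw [Prod.ext_iff]
      exact ⟨h1, by simp [hb, hr2]⟩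
    refine ⟨?_, hcl⟩
    unfold cX
    have hfin : (⟨r.val % 2, by omega⟩ : Fin 2) = B.rIdx j s := by
      apply Fin.ext; simp; omega
    rw [← hcl, hfin, hocc]
  · simp only [hb, if_false] at h
    injection h with h1 h2
    have hv2 : (B.rIdx j s).val + 2 = r.val := by
      have := congrArg Fin.val h2; simpa using this
    have hr2 : ¬ r.val < 2 := by omega
    have hb' : (B.clause j s).2 = false := by simpa using hb
    have hcl : B.clause j s = (i, decide (r.val < 2)) := by
      rw [Prod.ext_iff]
      exact ⟨h1, by simp [hb', hr2]⟩
    refine ⟨?_, hcl⟩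
    unfold cX
    have hfin : (⟨r.val % 2, by omega⟩ : Fin 2) = B.rIdx j s := by
      apply Fin.ext; simp; omega
    rw [← hcl, hfin, hocc]


def pick (B : E3SAT n m) (f : Fin n → Bool) (j : Fin m) : Fin 3 :=
  if f (B.clause j 0).1 = (B.clause j 0).2 then 0
  else if f (B.clause j 1).1 = (B.clause j 1).2 then 1 else 2

lemma pick_spec (B : E3SAT n m) (f : Fin n → Bool)
    (hf : ∀ j : Fin m, ∃ s, f (B.clause j s).1 = (B.clause j s).2) (j : Fin m) :
    f (B.clause j (pick B f j)).1 = (B.clause j (pick B f j)).2 := by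
  unfold pick
  split_ifs with h0 h1
  · exact h0
  · exact h1
  · rcases hf j with ⟨s, hs⟩
    fin_cases s <;> simp_all

def fwdM (f : Fin n → Bool) (σ : Fin m → Fin 3) : Res3 n m → Option (Hos3 n m)
  | .X i r => some (.Y i (if f i then r else r + 1))
  | .K i r => some (.L i (if f i then r else r + 1))
  | .P j s =>
      if hs : s.val < 3 then
        some (if (⟨s.val, hs⟩ : Fin 3) = σ j then .Z j 0 else .C j ⟨s.val, hs⟩)
      else
        some (if (⟨s.val - 3, by have := s.isLt; omega⟩ : Fin 3) = σ j then .Z j 1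
              else .Z j ⟨s.val - 1, by have := s.isLt; omega⟩)
  | .Q j => some (.C j (σ j))
  | .T j => some (.Z j ⟨(σ j).val + 2, by have := (σ j).isLt; omega⟩)

def fwdW (f : Fin n → Bool) (σ : Fin m → Fin 3) : Hos3 n m → Res3 n m
  | .Y i r => .X i (if f i then r else r - 1)
  | .L i r => .K i (if f i then r else r - 1)
  | .C j s => if s = σ j then .Q j else .P j ⟨s.val, by have := s.isLt; omega⟩
  | .Z j r =>
      if r.val = 0 then .P j ⟨(σ j).val, by have := (σ j).isLt; omega⟩
      else if r.val = 1 then .P j ⟨(σ j).val + 3, by have := (σ j).isLt; omega⟩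
      else if r.val = (σ j).val + 2 then .T j
      else .P j ⟨r.val + 1, by have := r.isLt; omega⟩

lemma fwdW_M (f : Fin n → Bool) (σ : Fin m → Fin 3) :
    ∀ r h, fwdM f σ r = some h → fwdW f σ h = r := by
  intro r h hr
  cases r with
  | X i r =>
      simp only [fwdM, Option.some.injEq] at hr
      subst hr
      by_cases hfi : f i <;> simp [fwdW, hfi]
  | K i r =>
      simp only [fwdM, Option.some.injEq] at hr
      subst hr
      by_cases hfi : f i <;> simp [fwdW, hfi]
  | P j s =>
      have hs6 := s.isLt
      simp only [fwdM] at hr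
      split_ifs at hr with hs h1 h2 <;>
        (injection hr with hr; subst hr; simp only [fwdW])
      · have hv := congrArg Fin.val h1
        simp at hv
        rw [if_pos (by simp)]
        congr 1
        apply Fin.ext; simp; omega
      · rw [if_neg h1]
      · have hv := congrArg Fin.val h2
        simp at hv
        rw [if_neg (by simp), if_pos (by simp)]
        congr 1
        apply Fin.ext; simp; omega
      · have hne : s.val - 3 ≠ (σ j).val := fun hc => h2 (Fin.ext (by simpa using hc))
        rw [if_neg (show ¬(s.val - 1 = 0) by omega), if_neg (show ¬(s.val - 1 = 1) by omega),
          if_neg (show ¬(s.val - 1 = (σ j).val + 2) by omega)]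
        congr 1
        apply Fin.ext; simp; omega
  | Q j =>
      simp only [fwdM, Option.some.injEq] at hr
      subst hr
      simp [fwdW]
  | T j =>
      simp only [fwdM, Option.some.injEq] at hr
      subst hr
      have := (σ j).isLt
      simp only [fwdW]
      rw [if_neg (by simp), if_neg (by simp), if_pos (by simp)]

lemma fwd_inj (f : Fin n → Bool) (σ : Fin m → Fin 3) :
    ∀ r₁ r₂ h, fwdM f σ r₁ = some h → fwdM f σ r₂ = some h → r₁ = r₂ := by
  intro r₁ r₂ h h1 h2
  rw [← fwdW_M f σ r₁ h h1, fwdW_M f σ r₂ h h2]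


lemma not_open_of {R H : Type} [DecidableEq R] [DecidableEq H] (I : HRC1 R H)
    (M : R → Option H)
    (inj : ∀ r₁ r₂ h, M r₁ = some h → M r₂ = some h → r₁ = r₂)
    (h : H) (r r' : R) (hM : M r' = some h)
    (hnp : ¬ HRC1.Prefers (I.hospPref h) r r') : ¬ I.HospOpenFor M h r := by
  rintro (hfree | ⟨r'', hr'', hp⟩)
  · exact hfree r' hM
  · rw [inj r'' r' h hr'' hM] at hp
    exact hnp hp

lemma not_open_top {R H : Type} [DecidableEq R] [DecidableEq H] (I : HRC1 R H)
    (M : R → Option H)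
    (inj : ∀ r₁ r₂ h, M r₁ = some h → M r₂ = some h → r₁ = r₂)
    (h : H) (r r' : R) (hM : M r' = some h)
    (hidx : (I.hospPref h).idxOf r' = 0) : ¬ I.HospOpenFor M h r := by
  refine not_open_of I M inj h r r' hM ?_
  rintro ⟨-, -, hlt⟩
  rw [hidx] at hlt
  omega

lemma tri3 (x : Fin 3) : x = 0 ∨ x = 1 ∨ x = 2 := by omega
lemma quad4 (x : Fin 4) : x = 0 ∨ x = 1 ∨ x = 2 ∨ x = 3 := by omega

lemma not_open_cX (B : E3SAT n m) (f : Fin n → Bool) (σ : Fin m → Fin 3)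
    (hσ : ∀ j, f (B.clause j (σ j)).1 = (B.clause j (σ j)).2)
    (inj : ∀ r₁ r₂ h, fwdM f σ r₁ = some h → fwdM f σ r₂ = some h → r₁ = r₂)
    (i : Fin n) (r : Fin 4) (hfib : f i ≠ decide (r.val < 2)) (x : Res3 n m) :
    ¬ (instI33 B).HospOpenFor (fwdM f σ) (cX B i r) x := by
  set o := B.occ (i, decide (r.val < 2)) ⟨r.val % 2, by omega⟩ with ho
  have hclause : B.clause o.1 o.2 = (i, decide (r.val < 2)) := B.occ_spec _ _
  have hcx : cX B i r = Hos3.C o.1 o.2 := rfl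
  have hsne : o.2 ≠ σ o.1 := by
    intro he
    apply hfib
    have h2 := hσ o.1
    rw [← he, hclause] at h2
    simpa using h2
  have hM : fwdM f σ (Res3.P o.1 ⟨(o.2).val, by have := (o.2).isLt; omega⟩)
      = some (Hos3.C o.1 o.2) := by
    simp only [fwdM]
    rw [dif_pos (o.2).isLt, if_neg (by simpa using hsne)]
  rw [hcx]
  exact not_open_top _ _ inj _ x _ hM (by simp [instI33])


lemma fwd_stable (B : E3SAT n m) (f : Fin n → Bool) (σ : Fin m → Fin 3)
    (hσ : ∀ j, f (B.clause j (σ j)).1 = (B.clause j (σ j)).2) :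
    (instI33 B).Stable (fwdM f σ) ∧ ∀ r, (fwdM f σ r).isSome := by
  have inj := fwd_inj f σ
  -- occupant lemmas
  have hMP3 : ∀ (j : Fin m) (s : Fin 3), s ≠ σ j →
      fwdM f σ (Res3.P j ⟨s.val, by have := s.isLt; omega⟩) = some (Hos3.C j s) := by
    intro j s hs
    simp only [fwdM]
    rw [dif_pos s.isLt, if_neg (by simpa using hs)]
  have hMPσ : ∀ j : Fin m,
      fwdM f σ (Res3.P j ⟨(σ j).val, by have := (σ j).isLt; omega⟩) = some (Hos3.Z j 0) := by
    intro j
    simp only [fwdM]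
    rw [dif_pos (σ j).isLt, if_pos (by simp)]
  have hMP6 : ∀ (j : Fin m) (s : Fin 3), s ≠ σ j →
      fwdM f σ (Res3.P j ⟨s.val + 3, by have := s.isLt; omega⟩)
        = some (Hos3.Z j ⟨s.val + 2, by have := s.isLt; omega⟩) := by
    intro j s hs
    simp only [fwdM]
    rw [dif_neg (by simp), if_neg (by simpa using hs)]
    exact congrArg some (congrArg (Hos3.Z j) (Fin.ext (show s.val + 3 - 1 = s.val + 2 by omega)))
  have hMP6σ : ∀ j : Fin m,
      fwdM f σ (Res3.P j ⟨(σ j).val + 3, by have := (σ j).isLt; omega⟩)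
        = some (Hos3.Z j 1) := by
    intro j
    simp only [fwdM]
    rw [dif_neg (by simp), if_pos (by simp)]
  have memX : ∀ (i : Fin n) (r : Fin 4), (Res3.X i r, Res3.K i r) ∈ (instI33 B).couples := by
    intro i r
    simp only [instI33, List.mem_append, List.mem_flatMap, List.mem_map, List.mem_finRange]
    exact Or.inl ⟨i, trivial, r, trivial, rfl⟩
  have memP : ∀ (j : Fin m) (s : Fin 3),
      (Res3.P j ⟨s.val, by have := s.isLt; omega⟩,
       Res3.P j ⟨s.val + 3, by have := s.isLt; omega⟩) ∈ (instI33 B).couples := by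
    intro j s
    simp only [instI33, List.mem_append, List.mem_flatMap, List.mem_map, List.mem_finRange]
    exact Or.inr ⟨j, trivial, s, trivial, rfl⟩
  refine ⟨⟨⟨inj, ?_, ?_, ?_⟩, ?_, ?_⟩, ?_⟩
  · -- singles matched within lists
    intro r hr h hM
    simp only [instI33, List.mem_append, List.mem_map, List.mem_finRange] at hr
    rcases hr with ⟨j, -, rfl⟩ | ⟨j, -, rfl⟩
    · simp only [fwdM, Option.some.injEq] at hM
      subst hM
      rcases tri3 (σ j) with h3 | h3 | h3 <;> simp only [h3] <;> simp [instI33]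
    · simp only [fwdM, Option.some.injEq] at hM
      subst hM
      rcases tri3 (σ j) with h3 | h3 | h3 <;> simp only [h3] <;> simp [instI33]
  · -- couples jointly matched
    intro c hc
    simp only [instI33, List.mem_append, List.mem_flatMap, List.mem_map, List.mem_finRange] at hc
    rcases hc with ⟨i, -, r, -, hc⟩ | ⟨j, -, s, -, hc⟩
    · subst hc
      right
      by_cases hfi : f i
      · fin_cases r
        · exact ⟨(Hos3.Y i 0, Hos3.L i 0), by simp [instI33], by simp [fwdM, hfi], by simp [fwdM, hfi]⟩
        · exact ⟨(Hos3.Y i 1, Hos3.L i 1), by simp [instI33], by simp [fwdM, hfi], by simp [fwdM, hfi]⟩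
        · exact ⟨(Hos3.Y i 2, Hos3.L i 2), by simp [instI33], by simp [fwdM, hfi], by simp [fwdM, hfi]⟩
        · exact ⟨(Hos3.Y i 3, Hos3.L i 3), by simp [instI33], by simp [fwdM, hfi], by simp [fwdM, hfi]⟩
      · fin_cases r
        · exact ⟨(Hos3.Y i 1, Hos3.L i 1), by simp [instI33], by simp [fwdM, hfi], by simp [fwdM, hfi]⟩
        · exact ⟨(Hos3.Y i 2, Hos3.L i 2), by simp [instI33], by simp [fwdM, hfi], by simp [fwdM, hfi]⟩
        · exact ⟨(Hos3.Y i 3, Hos3.L i 3), by simp [instI33], by simp [fwdM, hfi], by simp [fwdM, hfi]⟩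
        · exact ⟨(Hos3.Y i 0, Hos3.L i 0), by simp [instI33], by simp [fwdM, hfi], by simp [fwdM, hfi]⟩
    · subst hc
      right
      by_cases hsσ : s = σ j
      · subst hsσ
        exact ⟨(Hos3.Z j 0, Hos3.Z j 1), by simp [instI33, (σ j).isLt], hMPσ j, hMP6σ j⟩
      · exact ⟨(Hos3.C j s, Hos3.Z j ⟨s.val + 2, by have := s.isLt; omega⟩),
          by simp [instI33, s.isLt], hMP3 j s hsσ, hMP6 j s hsσ⟩
  · -- matched residents are singles or couple members
    intro r hr
    clear hr
    cases r with
    | X i r => exact Or.inr ⟨(Res3.X i r, Res3.K i r), memX i r, Or.inl rfl⟩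
    | K i r => exact Or.inr ⟨(Res3.X i r, Res3.K i r), memX i r, Or.inr rfl⟩
    | P j s =>
        by_cases hs : s.val < 3
        · exact Or.inr ⟨_, memP j ⟨s.val, hs⟩, Or.inl rfl⟩
        · refine Or.inr ⟨_, memP j ⟨s.val - 3, by have := s.isLt; omega⟩, Or.inr ?_⟩
          exact congrArg (Res3.P j) (Fin.ext (by simp; omega))
    | Q j =>
        left
        simp only [instI33, List.mem_append, List.mem_map, List.mem_finRange]
        exact Or.inl ⟨j, trivial, rfl⟩
    | T j =>
        left
        simp only [instI33, List.mem_append, List.mem_map, List.mem_finRange]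
        exact Or.inr ⟨j, trivial, rfl⟩
  · -- no blocking single
    rintro r h ⟨hrs, hhl, hworse, hopen⟩
    simp only [instI33, List.mem_append, List.mem_map, List.mem_finRange] at hrs
    rcases hrs with ⟨j, -, rfl⟩ | ⟨j, -, rfl⟩
    · have hSP : (instI33 B).singlePref (Res3.Q j) = [Hos3.C j 0, Hos3.C j 1, Hos3.C j 2] := by
        simp [instI33]
      rw [hSP] at hhl hworse
      rcases hworse with he | ⟨h', he, hpq⟩
      · simp [fwdM] at he
      · simp only [fwdM, Option.some.injEq] at he
        subst he
        simp only [List.mem_cons, List.not_mem_nil, or_false] at hhl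
        rcases hhl with rfl | rfl | rfl
        · by_cases has : (0 : Fin 3) = σ j
          · simp only [← has] at hpq
            rcases hpq with ⟨-, -, hlt⟩
            simp [List.idxOf_cons] at hlt
          · exact not_open_top _ _ inj _ _ _ (hMP3 j 0 has) (by simp [instI33]) hopen
        · by_cases has : (1 : Fin 3) = σ j
          · simp only [← has] at hpq
            rcases hpq with ⟨-, -, hlt⟩
            simp [List.idxOf_cons] at hlt
          · exact not_open_top _ _ inj _ _ _ (hMP3 j 1 has) (by simp [instI33]) hopen
        · by_cases has : (2 : Fin 3) = σ j
          · simp only [← has] at hpq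
            rcases hpq with ⟨-, -, hlt⟩
            simp [List.idxOf_cons] at hlt
          · exact not_open_top _ _ inj _ _ _ (hMP3 j 2 has) (by simp [instI33]) hopen
    · have hSP : (instI33 B).singlePref (Res3.T j) = [Hos3.Z j 2, Hos3.Z j 3, Hos3.Z j 4] := by
        simp [instI33]
      rw [hSP] at hhl hworse
      rcases hworse with he | ⟨h', he, hpq⟩
      · simp [fwdM] at he
      · simp only [fwdM, Option.some.injEq] at he
        subst he
        simp only [List.mem_cons, List.not_mem_nil, or_false] at hhl
        rcases hhl with rfl | rfl | rfl
        · by_cases has : (0 : Fin 3) = σ j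
          · simp only [← has] at hpq
            rcases hpq with ⟨-, -, hlt⟩
            simp [List.idxOf_cons] at hlt
          · exact not_open_top _ _ inj _ _ _ (hMP6 j 0 has) (by simp [instI33]) hopen
        · by_cases has : (1 : Fin 3) = σ j
          · simp only [← has] at hpq
            rcases hpq with ⟨-, -, hlt⟩
            simp [List.idxOf_cons] at hlt
          · exact not_open_top _ _ inj _ _ _ (hMP6 j 1 has) (by simp [instI33]) hopen
        · by_cases has : (2 : Fin 3) = σ j
          · simp only [← has] at hpq
            rcases hpq with ⟨-, -, hlt⟩
            simp [List.idxOf_cons] at hlt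
          · exact not_open_top _ _ inj _ _ _ (hMP6 j 2 has) (by simp [instI33]) hopen
  · -- no blocking couple
    rintro c hp ⟨hc, hhp, hpref, h1, h2⟩
    simp only [instI33, List.mem_append, List.mem_flatMap, List.mem_map, List.mem_finRange] at hc
    rcases hc with ⟨i, -, r, -, hc⟩ | ⟨j, -, s, -, hc⟩
    · subst hc
      by_cases hfi : f i
      · rcases quad4 r with rfl | rfl | rfl | rfl
        · -- r = 0, true: at first choice (Y i 0, L i 0)
          have hL : (instI33 B).couplePref (Res3.X i 0, Res3.K i 0)
              = [(Hos3.Y i 0, Hos3.L i 0), (cX B i 0, Hos3.L i 1), (Hos3.Y i 1, Hos3.L i 1)] := by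
            simp [instI33]
          rw [hL] at hhp hpref
          rcases hpref with ⟨he, -⟩ | ⟨hp', hmem', e1, e2, hpp⟩
          · simp [fwdM] at he
          · simp only [List.mem_cons, List.not_mem_nil, or_false] at hmem'
            rcases hmem' with rfl | rfl | rfl
            · rcases hpp with ⟨-, -, hlt⟩
              simp only [List.idxOf_cons_self] at hlt
              omega
            · exact absurd e1 (by simp [fwdM, hfi, cX])
            · exact absurd e1 (by simp [fwdM, hfi])
        · -- r = 1, true: at first choice (Y i 1, L i 1)
          have hL : (instI33 B).couplePref (Res3.X i 1, Res3.K i 1)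
              = [(Hos3.Y i 1, Hos3.L i 1), (cX B i 1, Hos3.L i 2), (Hos3.Y i 2, Hos3.L i 2)] := by
            simp [instI33]
          rw [hL] at hhp hpref
          rcases hpref with ⟨he, -⟩ | ⟨hp', hmem', e1, e2, hpp⟩
          · simp [fwdM] at he
          · simp only [List.mem_cons, List.not_mem_nil, or_false] at hmem'
            rcases hmem' with rfl | rfl | rfl
            · rcases hpp with ⟨-, -, hlt⟩
              simp only [List.idxOf_cons_self] at hlt
              omega
            · exact absurd e1 (by simp [fwdM, hfi, cX])
            · exact absurd e1 (by simp [fwdM, hfi])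
        · -- r = 2, true: at third choice (Y i 2, L i 2)
          have hL : (instI33 B).couplePref (Res3.X i 2, Res3.K i 2)
              = [(Hos3.Y i 3, Hos3.L i 3), (cX B i 2, Hos3.L i 2), (Hos3.Y i 2, Hos3.L i 2)] := by
            simp [instI33]
          rw [hL] at hhp hpref
          rcases hpref with ⟨he, -⟩ | ⟨hp', hmem', e1, e2, hpp⟩
          · simp [fwdM] at he
          · simp only [List.mem_cons, List.not_mem_nil, or_false] at hmem'
            rcases hmem' with rfl | rfl | rfl
            · exact absurd e1 (by simp [fwdM, hfi])
            · exact absurd e1 (by simp [fwdM, hfi, cX])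
            · simp only [List.mem_cons, List.not_mem_nil, or_false] at hhp
              rcases hhp with rfl | rfl | rfl
              · rcases h2 with h2 | h2
                · simp [fwdM, hfi] at h2
                · exact not_open_top _ _ inj _ _ _
                    (show fwdM f σ (Res3.K i 3) = some (Hos3.L i 3) by simp [fwdM, hfi])
                    (by simp [instI33]) h2
              · rcases h1 with h1 | h1
                · simp [fwdM, hfi, cX] at h1
                · exact not_open_cX B f σ hσ inj i 2 (by simp [hfi]) _ h1
              · rcases hpp with ⟨-, -, hlt⟩
                omega
        · -- r = 3, true: at third choice (Y i 3, L i 3)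
          have hL : (instI33 B).couplePref (Res3.X i 3, Res3.K i 3)
              = [(Hos3.Y i 0, Hos3.L i 0), (cX B i 3, Hos3.L i 3), (Hos3.Y i 3, Hos3.L i 3)] := by
            simp [instI33]
          rw [hL] at hhp hpref
          rcases hpref with ⟨he, -⟩ | ⟨hp', hmem', e1, e2, hpp⟩
          · simp [fwdM] at he
          · simp only [List.mem_cons, List.not_mem_nil, or_false] at hmem'
            rcases hmem' with rfl | rfl | rfl
            · exact absurd e1 (by simp [fwdM, hfi])
            · exact absurd e1 (by simp [fwdM, hfi, cX])
            · simp only [List.mem_cons, List.not_mem_nil, or_false] at hhp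
              rcases hhp with rfl | rfl | rfl
              · rcases h1 with h1 | h1
                · simp [fwdM, hfi] at h1
                · exact not_open_top _ _ inj _ _ _
                    (show fwdM f σ (Res3.X i 0) = some (Hos3.Y i 0) by simp [fwdM, hfi])
                    (by simp [instI33]) h1
              · rcases h1 with h1 | h1
                · simp [fwdM, hfi, cX] at h1
                · exact not_open_cX B f σ hσ inj i 3 (by simp [hfi]) _ h1
              · rcases hpp with ⟨-, -, hlt⟩
                omega
      · rcases quad4 r with rfl | rfl | rfl | rfl
        · -- r = 0, false: at third choice (Y i 1, L i 1)
          have hL : (instI33 B).couplePref (Res3.X i 0, Res3.K i 0)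
              = [(Hos3.Y i 0, Hos3.L i 0), (cX B i 0, Hos3.L i 1), (Hos3.Y i 1, Hos3.L i 1)] := by
            simp [instI33]
          rw [hL] at hhp hpref
          rcases hpref with ⟨he, -⟩ | ⟨hp', hmem', e1, e2, hpp⟩
          · simp [fwdM] at he
          · simp only [List.mem_cons, List.not_mem_nil, or_false] at hmem'
            rcases hmem' with rfl | rfl | rfl
            · exact absurd e1 (by simp [fwdM, hfi])
            · exact absurd e1 (by simp [fwdM, hfi, cX])
            · simp only [List.mem_cons, List.not_mem_nil, or_false] at hhp
              rcases hhp with rfl | rfl | rfl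
              · rcases h2 with h2 | h2
                · simp [fwdM, hfi] at h2
                · exact not_open_top _ _ inj _ _ _
                    (show fwdM f σ (Res3.K i 3) = some (Hos3.L i 0) by simp [fwdM, hfi])
                    (by simp [instI33]) h2
              · rcases h1 with h1 | h1
                · simp [fwdM, hfi, cX] at h1
                · exact not_open_cX B f σ hσ inj i 0 (by simp [hfi]) _ h1
              · rcases hpp with ⟨-, -, hlt⟩
                omega
        · -- r = 1, false: at third choice (Y i 2, L i 2)
          have hL : (instI33 B).couplePref (Res3.X i 1, Res3.K i 1)
              = [(Hos3.Y i 1, Hos3.L i 1), (cX B i 1, Hos3.L i 2), (Hos3.Y i 2, Hos3.L i 2)] := by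
            simp [instI33]
          rw [hL] at hhp hpref
          rcases hpref with ⟨he, -⟩ | ⟨hp', hmem', e1, e2, hpp⟩
          · simp [fwdM] at he
          · simp only [List.mem_cons, List.not_mem_nil, or_false] at hmem'
            rcases hmem' with rfl | rfl | rfl
            · exact absurd e1 (by simp [fwdM, hfi])
            · exact absurd e1 (by simp [fwdM, hfi, cX])
            · simp only [List.mem_cons, List.not_mem_nil, or_false] at hhp
              rcases hhp with rfl | rfl | rfl
              · rcases h2 with h2 | h2
                · simp [fwdM, hfi] at h2
                · exact not_open_top _ _ inj _ _ _
                    (show fwdM f σ (Res3.K i 0) = some (Hos3.L i 1) by simp [fwdM, hfi])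
                    (by simp [instI33]) h2
              · rcases h1 with h1 | h1
                · simp [fwdM, hfi, cX] at h1
                · exact not_open_cX B f σ hσ inj i 1 (by simp [hfi]) _ h1
              · rcases hpp with ⟨-, -, hlt⟩
                omega
        · -- r = 2, false: at first choice (Y i 3, L i 3)
          have hL : (instI33 B).couplePref (Res3.X i 2, Res3.K i 2)
              = [(Hos3.Y i 3, Hos3.L i 3), (cX B i 2, Hos3.L i 2), (Hos3.Y i 2, Hos3.L i 2)] := by
            simp [instI33]
          rw [hL] at hhp hpref
          rcases hpref with ⟨he, -⟩ | ⟨hp', hmem', e1, e2, hpp⟩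
          · simp [fwdM] at he
          · simp only [List.mem_cons, List.not_mem_nil, or_false] at hmem'
            rcases hmem' with rfl | rfl | rfl
            · rcases hpp with ⟨-, -, hlt⟩
              simp only [List.idxOf_cons_self] at hlt
              omega
            · exact absurd e1 (by simp [fwdM, hfi, cX])
            · exact absurd e1 (by simp [fwdM, hfi])
        · -- r = 3, false: at first choice (Y i 0, L i 0)
          have hL : (instI33 B).couplePref (Res3.X i 3, Res3.K i 3)
              = [(Hos3.Y i 0, Hos3.L i 0), (cX B i 3, Hos3.L i 3), (Hos3.Y i 3, Hos3.L i 3)] := by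
            simp [instI33]
          rw [hL] at hhp hpref
          rcases hpref with ⟨he, -⟩ | ⟨hp', hmem', e1, e2, hpp⟩
          · simp [fwdM] at he
          · simp only [List.mem_cons, List.not_mem_nil, or_false] at hmem'
            rcases hmem' with rfl | rfl | rfl
            · rcases hpp with ⟨-, -, hlt⟩
              simp only [List.idxOf_cons_self] at hlt
              omega
            · exact absurd e1 (by simp [fwdM, hfi, cX])
            · exact absurd e1 (by simp [fwdM, hfi])
    · subst hc
      rcases tri3 s with hs3 | hs3 | hs3 <;> subst hs3
      · -- s = 0
        have hL : (instI33 B).couplePref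
            (Res3.P j ⟨((0 : Fin 3)).val, by decide⟩, Res3.P j ⟨((0 : Fin 3)).val + 3, by decide⟩)
            = [(Hos3.Z j 0, Hos3.Z j 1), (Hos3.C j 0, Hos3.Z j 2)] := by
          simp [instI33] <;> decide
        rw [hL] at hhp hpref
        rcases tri3 (σ j) with hσj | hσj | hσj
        · -- σ = 0: couple at first choice
          rcases hpref with ⟨he, -⟩ | ⟨hp', hmem', e1, e2, hpp⟩
          · simp [fwdM] at he
          · simp only [List.mem_cons, List.not_mem_nil, or_false] at hmem'
            rcases hmem' with rfl | rfl
            · rcases hpp with ⟨-, -, hlt⟩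
              simp only [List.idxOf_cons_self] at hlt
              omega
            · simp [fwdM, hσj] at e1
        · -- σ = 1: couple at second choice, refute via h2
          rcases hpref with ⟨he, -⟩ | ⟨hp', hmem', e1, e2, hpp⟩
          · simp [fwdM] at he
          · simp only [List.mem_cons, List.not_mem_nil, or_false] at hmem'
            rcases hmem' with rfl | rfl
            · simp [fwdM, hσj] at e1
            · simp only [List.mem_cons, List.not_mem_nil, or_false] at hhp
              rcases hhp with rfl | rfl
              · rcases h2 with hside | hside
                · simp [fwdM, hσj] at hside
                · have hM := hMP6σ j
                  simp only [hσj] at hM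
                  refine not_open_of _ _ inj _ _ _ hM ?_ hside
                  rintro ⟨-, -, hlt⟩
                  simp [instI33, List.idxOf_cons] at hlt
              · rcases hpp with ⟨-, -, hlt⟩
                omega
        · -- σ = 2: couple at second choice, refute via h2
          rcases hpref with ⟨he, -⟩ | ⟨hp', hmem', e1, e2, hpp⟩
          · simp [fwdM] at he
          · simp only [List.mem_cons, List.not_mem_nil, or_false] at hmem'
            rcases hmem' with rfl | rfl
            · simp [fwdM, hσj] at e1
            · simp only [List.mem_cons, List.not_mem_nil, or_false] at hhp
              rcases hhp with rfl | rfl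
              · rcases h2 with hside | hside
                · simp [fwdM, hσj] at hside
                · have hM := hMP6σ j
                  simp only [hσj] at hM
                  refine not_open_of _ _ inj _ _ _ hM ?_ hside
                  rintro ⟨-, -, hlt⟩
                  simp [instI33, List.idxOf_cons] at hlt
              · rcases hpp with ⟨-, -, hlt⟩
                omega
      · -- s = 1
        have hL : (instI33 B).couplePref
            (Res3.P j ⟨((1 : Fin 3)).val, by decide⟩, Res3.P j ⟨((1 : Fin 3)).val + 3, by decide⟩)
            = [(Hos3.Z j 0, Hos3.Z j 1), (Hos3.C j 1, Hos3.Z j 3)] := by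
          simp [instI33] <;> decide
        rw [hL] at hhp hpref
        rcases tri3 (σ j) with hσj | hσj | hσj
        · -- σ = 0: couple at second choice, refute via h1
          rcases hpref with ⟨he, -⟩ | ⟨hp', hmem', e1, e2, hpp⟩
          · simp [fwdM] at he
          · simp only [List.mem_cons, List.not_mem_nil, or_false] at hmem'
            rcases hmem' with rfl | rfl
            · simp [fwdM, hσj] at e1
            · simp only [List.mem_cons, List.not_mem_nil, or_false] at hhp
              rcases hhp with rfl | rfl
              · rcases h1 with hside | hside
                · simp [fwdM, hσj] at hside
                · have hM := hMPσ j
                  simp only [hσj] at hM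
                  refine not_open_of _ _ inj _ _ _ hM ?_ hside
                  rintro ⟨-, -, hlt⟩
                  simp [instI33, List.idxOf_cons] at hlt
              · rcases hpp with ⟨-, -, hlt⟩
                omega
        · -- σ = 1: couple at first choice
          rcases hpref with ⟨he, -⟩ | ⟨hp', hmem', e1, e2, hpp⟩
          · simp [fwdM] at he
          · simp only [List.mem_cons, List.not_mem_nil, or_false] at hmem'
            rcases hmem' with rfl | rfl
            · rcases hpp with ⟨-, -, hlt⟩
              simp only [List.idxOf_cons_self] at hlt
              omega
            · simp [fwdM, hσj] at e1
        · -- σ = 2: couple at second choice, refute via h2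
          rcases hpref with ⟨he, -⟩ | ⟨hp', hmem', e1, e2, hpp⟩
          · simp [fwdM] at he
          · simp only [List.mem_cons, List.not_mem_nil, or_false] at hmem'
            rcases hmem' with rfl | rfl
            · simp [fwdM, hσj] at e1
            · simp only [List.mem_cons, List.not_mem_nil, or_false] at hhp
              rcases hhp with rfl | rfl
              · rcases h2 with hside | hside
                · simp [fwdM, hσj] at hside
                · have hM := hMP6σ j
                  simp only [hσj] at hM
                  refine not_open_of _ _ inj _ _ _ hM ?_ hside
                  rintro ⟨-, -, hlt⟩
                  simp [instI33, List.idxOf_cons] at hlt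
              · rcases hpp with ⟨-, -, hlt⟩
                omega
      · -- s = 2
        have hL : (instI33 B).couplePref
            (Res3.P j ⟨((2 : Fin 3)).val, by decide⟩, Res3.P j ⟨((2 : Fin 3)).val + 3, by decide⟩)
            = [(Hos3.Z j 0, Hos3.Z j 1), (Hos3.C j 2, Hos3.Z j 4)] := by
          simp [instI33] <;> decide
        rw [hL] at hhp hpref
        rcases tri3 (σ j) with hσj | hσj | hσj
        · -- σ = 0: couple at second choice, refute via h1
          rcases hpref with ⟨he, -⟩ | ⟨hp', hmem', e1, e2, hpp⟩
          · simp [fwdM] at he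
          · simp only [List.mem_cons, List.not_mem_nil, or_false] at hmem'
            rcases hmem' with rfl | rfl
            · simp [fwdM, hσj] at e1
            · simp only [List.mem_cons, List.not_mem_nil, or_false] at hhp
              rcases hhp with rfl | rfl
              · rcases h1 with hside | hside
                · simp [fwdM, hσj] at hside
                · have hM := hMPσ j
                  simp only [hσj] at hM
                  refine not_open_of _ _ inj _ _ _ hM ?_ hside
                  rintro ⟨-, -, hlt⟩
                  simp [instI33, List.idxOf_cons] at hlt
              · rcases hpp with ⟨-, -, hlt⟩
                omega
        · -- σ = 1: couple at second choice, refute via h1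
          rcases hpref with ⟨he, -⟩ | ⟨hp', hmem', e1, e2, hpp⟩
          · simp [fwdM] at he
          · simp only [List.mem_cons, List.not_mem_nil, or_false] at hmem'
            rcases hmem' with rfl | rfl
            · simp [fwdM, hσj] at e1
            · simp only [List.mem_cons, List.not_mem_nil, or_false] at hhp
              rcases hhp with rfl | rfl
              · rcases h1 with hside | hside
                · simp [fwdM, hσj] at hside
                · have hM := hMPσ j
                  simp only [hσj] at hM
                  refine not_open_of _ _ inj _ _ _ hM ?_ hside
                  rintro ⟨-, -, hlt⟩
                  simp [instI33, List.idxOf_cons] at hlt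
              · rcases hpp with ⟨-, -, hlt⟩
                omega
        · -- σ = 2: couple at first choice
          rcases hpref with ⟨he, -⟩ | ⟨hp', hmem', e1, e2, hpp⟩
          · simp [fwdM] at he
          · simp only [List.mem_cons, List.not_mem_nil, or_false] at hmem'
            rcases hmem' with rfl | rfl
            · rcases hpp with ⟨-, -, hlt⟩
              simp only [List.idxOf_cons_self] at hlt
              omega
            · simp [fwdM, hσj] at e1
  · -- completeness
    intro r
    cases r <;> simp only [fwdM] <;> first
      | rfl
      | (split <;> simp)



lemma bwd_sat (B : E3SAT n m) (M : Res3 n m → Option (Hos3 n m))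
    (hst : (instI33 B).Stable M) (hcomp : ∀ r, (M r).isSome) : B.Satisfiable := by
  obtain ⟨⟨inj, hsing, hcoup, -⟩, hnbs, hnbc⟩ := hst
  have memX : ∀ (i : Fin n) (r : Fin 4), (Res3.X i r, Res3.K i r) ∈ (instI33 B).couples := by
    intro i r
    simp only [instI33, List.mem_append, List.mem_flatMap, List.mem_map, List.mem_finRange]
    exact Or.inl ⟨i, trivial, r, trivial, rfl⟩
  have memP : ∀ (j : Fin m) (s : Fin 3),
      (Res3.P j ⟨s.val, by have := s.isLt; omega⟩,
       Res3.P j ⟨s.val + 3, by have := s.isLt; omega⟩) ∈ (instI33 B).couples := by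
    intro j s
    simp only [instI33, List.mem_append, List.mem_flatMap, List.mem_map, List.mem_finRange]
    exact Or.inr ⟨j, trivial, s, trivial, rfl⟩
  have hXc : ∀ (i : Fin n) (r : Fin 4),
      ∃ hp ∈ (instI33 B).couplePref (Res3.X i r, Res3.K i r),
        M (Res3.X i r) = some hp.1 ∧ M (Res3.K i r) = some hp.2 := by
    intro i r
    rcases hcoup _ (memX i r) with ⟨hn, -⟩ | ⟨hp, hmem, e1, e2⟩
    · have := hcomp (Res3.X i r); rw [hn] at this; simp at this
    · exact ⟨hp, hmem, e1, e2⟩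
  have hPc : ∀ (j : Fin m) (s : Fin 3),
      ∃ hp ∈ (instI33 B).couplePref
          (Res3.P j ⟨s.val, by have := s.isLt; omega⟩,
           Res3.P j ⟨s.val + 3, by have := s.isLt; omega⟩),
        M (Res3.P j ⟨s.val, by have := s.isLt; omega⟩) = some hp.1 ∧
        M (Res3.P j ⟨s.val + 3, by have := s.isLt; omega⟩) = some hp.2 := by
    intro j s
    rcases hcoup _ (memP j s) with ⟨hn, -⟩ | ⟨hp, hmem, e1, e2⟩
    · have := hcomp (Res3.P j ⟨s.val, by have := s.isLt; omega⟩); rw [hn] at this; simp at this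
    · exact ⟨hp, hmem, e1, e2⟩
  -- the X-couple preference lists
  have hLX : ∀ (i : Fin n),
      (instI33 B).couplePref (Res3.X i 0, Res3.K i 0)
        = [(Hos3.Y i 0, Hos3.L i 0), (cX B i 0, Hos3.L i 1), (Hos3.Y i 1, Hos3.L i 1)] ∧
      (instI33 B).couplePref (Res3.X i 1, Res3.K i 1)
        = [(Hos3.Y i 1, Hos3.L i 1), (cX B i 1, Hos3.L i 2), (Hos3.Y i 2, Hos3.L i 2)] ∧
      (instI33 B).couplePref (Res3.X i 2, Res3.K i 2)
        = [(Hos3.Y i 3, Hos3.L i 3), (cX B i 2, Hos3.L i 2), (Hos3.Y i 2, Hos3.L i 2)] ∧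
      (instI33 B).couplePref (Res3.X i 3, Res3.K i 3)
        = [(Hos3.Y i 0, Hos3.L i 0), (cX B i 3, Hos3.L i 3), (Hos3.Y i 3, Hos3.L i 3)] := by
    intro i
    refine ⟨?_, ?_, ?_, ?_⟩ <;> simp [instI33]
  have hLP : ∀ (j : Fin m) (s : Fin 3),
      (instI33 B).couplePref
          (Res3.P j ⟨s.val, by have := s.isLt; omega⟩,
           Res3.P j ⟨s.val + 3, by have := s.isLt; omega⟩)
        = [(Hos3.Z j 0, Hos3.Z j 1),
           (Hos3.C j s, Hos3.Z j ⟨s.val + 2, by have := s.isLt; omega⟩)] := by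
    intro j s
    simp [instI33, s.isLt, Fin.eta]
  refine ⟨fun i => decide (M (Res3.X i 0) = some (Hos3.Y i 0) ∨
      M (Res3.X i 1) = some (Hos3.Y i 1)), ?_⟩
  intro j
  -- locate T j
  obtain ⟨hT0, hTv⟩ := Option.isSome_iff_exists.mp (hcomp (Res3.T j))
  have hTmem : hT0 ∈ (instI33 B).singlePref (Res3.T j) := by
    refine hsing (Res3.T j) ?_ hT0 hTv
    simp only [instI33, List.mem_append, List.mem_map, List.mem_finRange]
    exact Or.inr ⟨j, trivial, rfl⟩
  have hTl : hT0 ∈ [Hos3.Z j 2, Hos3.Z j 3, Hos3.Z j 4] := by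
    rwa [show (instI33 B).singlePref (Res3.T j) = [Hos3.Z j 2, Hos3.Z j 3, Hos3.Z j 4]
      from by simp [instI33]] at hTmem
  have hTview : ∃ s₀ : Fin 3, M (Res3.T j)
      = some (Hos3.Z j ⟨s₀.val + 2, by have := s₀.isLt; omega⟩) := by
    simp only [List.mem_cons, List.not_mem_nil, or_false] at hTl
    rcases hTl with rfl | rfl | rfl
    exacts [⟨0, hTv⟩, ⟨1, hTv⟩, ⟨2, hTv⟩]
  obtain ⟨s₀, hT⟩ := hTview
  -- the couple (p_{s₀}, p_{s₀+3}) is matched to (z₁, z₂)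
  obtain ⟨hp, hmem, e1, e2⟩ := hPc j s₀
  rw [hLP j s₀] at hmem
  simp only [List.mem_cons, List.not_mem_nil, or_false] at hmem
  rcases hmem with rfl | rfl
  case inr =>
    exact absurd (inj _ _ _ e2 hT) (by simp)
  have hP0 : M (Res3.P j ⟨s₀.val, by have := s₀.isLt; omega⟩) = some (Hos3.Z j 0) := e1
  -- the other couples are matched to (c_s, z_{s+2})
  have hCs : ∀ s : Fin 3, s ≠ s₀ →
      M (Res3.P j ⟨s.val, by have := s.isLt; omega⟩) = some (Hos3.C j s) := by
    intro s hne
    obtain ⟨hp, hmem, f1, f2⟩ := hPc j s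
    rw [hLP j s] at hmem
    simp only [List.mem_cons, List.not_mem_nil, or_false] at hmem
    rcases hmem with rfl | rfl
    · have := inj _ _ _ f1 hP0
      simp only [Res3.P.injEq, Fin.mk.injEq, true_and] at this
      exact absurd (Fin.ext this) hne
    · exact f1
  -- Q j sits at c_{s₀}
  obtain ⟨hQ0, hQv⟩ := Option.isSome_iff_exists.mp (hcomp (Res3.Q j))
  have hQmem : hQ0 ∈ [Hos3.C j 0, Hos3.C j 1, Hos3.C j 2] := by
    have := hsing (Res3.Q j) (by
      simp only [instI33, List.mem_append, List.mem_map, List.mem_finRange]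
      exact Or.inl ⟨j, trivial, rfl⟩) hQ0 hQv
    rwa [show (instI33 B).singlePref (Res3.Q j) = [Hos3.C j 0, Hos3.C j 1, Hos3.C j 2]
      from by simp [instI33]] at this
  have hQview : ∃ s₁ : Fin 3, M (Res3.Q j) = some (Hos3.C j s₁) := by
    simp only [List.mem_cons, List.not_mem_nil, or_false] at hQmem
    rcases hQmem with rfl | rfl | rfl
    exacts [⟨0, hQv⟩, ⟨1, hQv⟩, ⟨2, hQv⟩]
  obtain ⟨s₁, hQ⟩ := hQview
  have hQ' : M (Res3.Q j) = some (Hos3.C j s₀) := by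
    have hs₁ : s₁ = s₀ := by
      by_contra hne
      exact absurd (inj _ _ _ hQ (hCs s₁ hne)) (by simp)
    rw [← hs₁]
    exact hQ
  -- identify x(c_{s₀})
  obtain ⟨i, r, hx⟩ : ∃ i r, xOfC B j s₀ = Res3.X i r := by
    by_cases hb : (B.clause j s₀).2
    · exact ⟨(B.clause j s₀).1, ⟨(B.rIdx j s₀).val, by have := (B.rIdx j s₀).isLt; omega⟩,
        by unfold xOfC; simp [hb]⟩
    · simp only [Bool.not_eq_true] at hb
      exact ⟨(B.clause j s₀).1, ⟨(B.rIdx j s₀).val + 2, by have := (B.rIdx j s₀).isLt; omega⟩,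
        by unfold xOfC; simp [hb]⟩
  obtain ⟨hcx, hclause⟩ := cX_xOfC B j s₀ i r hx
  -- the hospital list of c_{s₀}
  have hCpref : (instI33 B).hospPref (Hos3.C j s₀)
      = [Res3.P j ⟨s₀.val, by have := s₀.isLt; omega⟩, Res3.X i r, Res3.Q j] := by
    rw [show (instI33 B).hospPref (Hos3.C j s₀)
      = [Res3.P j ⟨s₀.val, by have := s₀.isLt; omega⟩, xOfC B j s₀, Res3.Q j]
      from by simp [instI33], hx]
  -- c_{s₀} is open for X i r
  have hopenC : (instI33 B).HospOpenFor M (Hos3.C j s₀) (Res3.X i r) := by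
    right
    refine ⟨Res3.Q j, hQ', ?_, ?_, ?_⟩ <;> rw [hCpref]
    · simp
    · simp
    · simp [List.idxOf_cons]
  -- a couple matched to its third choice would block with its second choice
  have hthird : ∀ a b b' : Fin 4, a ≠ b' →
      (instI33 B).couplePref (Res3.X i r, Res3.K i r)
        = [(Hos3.Y i a, Hos3.L i a), (Hos3.C j s₀, Hos3.L i b), (Hos3.Y i b', Hos3.L i b)] →
      M (Res3.X i r) = some (Hos3.Y i b') → M (Res3.K i r) = some (Hos3.L i b) → False := by
    intro a b b' hne hLl g1 g2
    refine hnbc (Res3.X i r, Res3.K i r) (Hos3.C j s₀, Hos3.L i b)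
      ⟨memX i r, ?_, ?_, ?_, ?_⟩
    · rw [hLl]; simp
    · right
      refine ⟨(Hos3.Y i b', Hos3.L i b), by rw [hLl]; simp, g1, g2, ?_, ?_, ?_⟩ <;> rw [hLl]
      · simp
      · simp
      · simp [List.idxOf_cons, hne, Ne.symm hne]
    · exact Or.inr hopenC
    · exact Or.inl g2
  rcases quad4 r with rfl | rfl | rfl | rfl
  · obtain ⟨hp, hmem, g1, g2⟩ := hXc i 0
    rw [(hLX i).1, hcx] at hmem
    simp only [List.mem_cons, List.not_mem_nil, or_false] at hmem
    rcases hmem with rfl | rfl | rfl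
    · refine ⟨s₀, ?_⟩
      rw [hclause]
      exact decide_eq_true (Or.inl g1)
    · exact absurd (inj _ _ _ g1 hQ') (by simp)
    · exact (hthird 0 1 1 (by decide) (by rw [(hLX i).1, hcx]) g1 g2).elim
  · obtain ⟨hp, hmem, g1, g2⟩ := hXc i 1
    rw [(hLX i).2.1, hcx] at hmem
    simp only [List.mem_cons, List.not_mem_nil, or_false] at hmem
    rcases hmem with rfl | rfl | rfl
    · refine ⟨s₀, ?_⟩
      rw [hclause]
      exact decide_eq_true (Or.inr g1)
    · exact absurd (inj _ _ _ g1 hQ') (by simp)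
    · exact (hthird 1 2 2 (by decide) (by rw [(hLX i).2.1, hcx]) g1 g2).elim
  · obtain ⟨hp, hmem, g1, g2⟩ := hXc i 2
    rw [(hLX i).2.2.1, hcx] at hmem
    simp only [List.mem_cons, List.not_mem_nil, or_false] at hmem
    rcases hmem with rfl | rfl | rfl
    · -- couple (x₂,k₂) at (y₃,l₃); show the variable is false
      have hi3 : M (Res3.X i 0) = some (Hos3.Y i 0) → False := by
        intro h0
        obtain ⟨hp3, hmem3, k1, k2⟩ := hXc i 3
        rw [(hLX i).2.2.2] at hmem3
        simp only [List.mem_cons, List.not_mem_nil, or_false] at hmem3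
        rcases hmem3 with rfl | rfl | rfl
        · exact absurd (inj _ _ _ k1 h0) (by simp)
        · exact absurd (inj _ _ _ k2 g2) (by simp)
        · exact absurd (inj _ _ _ k1 g1) (by simp)
      refine ⟨s₀, ?_⟩
      rw [hclause]
      refine decide_eq_false ?_
      rintro (h0 | h1)
      · exact hi3 h0
      · obtain ⟨hp1, hmem1, f1, f2⟩ := hXc i 1
        rw [(hLX i).2.1] at hmem1
        simp only [List.mem_cons, List.not_mem_nil, or_false] at hmem1
        rcases hmem1 with rfl | rfl | rfl
        · obtain ⟨hp0, hmem0, k1, k2⟩ := hXc i 0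
          rw [(hLX i).1] at hmem0
          simp only [List.mem_cons, List.not_mem_nil, or_false] at hmem0
          rcases hmem0 with rfl | rfl | rfl
          · exact hi3 k1
          · exact absurd (inj _ _ _ k2 f2) (by simp)
          · exact absurd (inj _ _ _ k1 h1) (by simp)
        · exact absurd (f1.symm.trans h1) (by simp [cX])
        · exact absurd (f1.symm.trans h1) (by simp)
    · exact absurd (inj _ _ _ g1 hQ') (by simp)
    · exact (hthird 3 2 2 (by decide) (by rw [(hLX i).2.2.1, hcx]) g1 g2).elim
  · obtain ⟨hp, hmem, g1, g2⟩ := hXc i 3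
    rw [(hLX i).2.2.2, hcx] at hmem
    simp only [List.mem_cons, List.not_mem_nil, or_false] at hmem
    rcases hmem with rfl | rfl | rfl
    · refine ⟨s₀, ?_⟩
      rw [hclause]
      refine decide_eq_false ?_
      rintro (h0 | h1)
      · exact absurd (inj _ _ _ h0 g1) (by simp)
      · obtain ⟨hp1, hmem1, f1, f2⟩ := hXc i 1
        rw [(hLX i).2.1] at hmem1
        simp only [List.mem_cons, List.not_mem_nil, or_false] at hmem1
        rcases hmem1 with rfl | rfl | rfl
        · obtain ⟨hp0, hmem0, k1, k2⟩ := hXc i 0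
          rw [(hLX i).1] at hmem0
          simp only [List.mem_cons, List.not_mem_nil, or_false] at hmem0
          rcases hmem0 with rfl | rfl | rfl
          · exact absurd (inj _ _ _ k1 g1) (by simp)
          · exact absurd (inj _ _ _ k2 f2) (by simp)
          · exact absurd (inj _ _ _ k1 h1) (by simp)
        · exact absurd (f1.symm.trans h1) (by simp [cX])
        · exact absurd (f1.symm.trans h1) (by simp)
    · exact absurd (inj _ _ _ g1 hQ') (by simp)
    · exact (hthird 0 3 3 (by decide) (by rw [(hLX i).2.2.2, hcx]) g1 g2).elim

end Reduction


/-- `B` is satisfiable if and only if `I₃₃(B)` admits a complete stable matching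
(one in which every resident is matched). -/
theorem satisfiable_iff_instI33_admits_complete_stable {n m : ℕ} (B : E3SAT n m) :
    B.Satisfiable ↔
      ∃ M : Res3 n m → Option (Hos3 n m),
        (instI33 B).Stable M ∧ ∀ r, (M r).isSome := by
  constructor
  · rintro ⟨f, hf⟩
    obtain ⟨hstable, hcompl⟩ := fwd_stable B f (pick B f) (pick_spec B f hf)
    exact ⟨fwdM f (pick B f), hstable, hcompl⟩
  · rintro ⟨M, hst, hcomp⟩
    exact bwd_sat B M hst hcomp
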